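/- Let f, g : ℝⁿ → ℝ be twice continuously differentiable and strongly convex, with θ(λ) the unique minimizer of f + λg (differentiable in λ, with ∇g(θ(λ)) ≠ 0 along the path), and Γ(λ) = min_θ (f(θ) + λg(θ)) the dual function. Then the set of maximizers of Γ over [0,∞) coincides with the set of minimizers of λ ↦ |g(θ(λ))| over [0,∞). -/

import Mathlib

/-- key step of Theorem 1: the maximizers of the dual function
`Γ(λ) = f(θ(λ)) + λ g(θ(λ))` over `[0,∞)` coincide with the minimizers of
`λ ↦ |g(θ(λ))|` over `[0,∞)`. -/
theorem stmt_9 {n : ℕ} (f g : EuclideanSpace ℝ (Fin n) → ℝ)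
    (hf : ContDiff ℝ 2 f) (hg : ContDiff ℝ 2 g)
    (hfc : ∃ m > (0:ℝ), StrongConvexOn Set.univ m f)
    (hgc : ∃ m > (0:ℝ), StrongConvexOn Set.univ m g)
    (θ : ℝ → EuclideanSpace ℝ (Fin n))
    (hθ : ∀ lam ≥ (0:ℝ), ∀ θ', θ' ≠ θ lam →
      f (θ lam) + lam * g (θ lam) < f θ' + lam * g θ')
    (hθd : Differentiable ℝ θ)
    (hgrad : ∀ lam ≥ (0:ℝ), gradient g (θ lam) ≠ 0) :
    {lam ∈ Set.Ici (0:ℝ) |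
        IsMaxOn (fun l => f (θ l) + l * g (θ l)) (Set.Ici 0) lam} =
      {lam ∈ Set.Ici (0:ℝ) |
        IsMinOn (fun l => |g (θ l)|) (Set.Ici 0) lam} := by
  have hfd : Differentiable ℝ f := hf.differentiable (by norm_num)
  have hgd : Differentiable ℝ g := hg.differentiable (by norm_num)
  -- first-order condition
  have hfo : ∀ l : ℝ, 0 ≤ l → fderiv ℝ f (θ l) + l • fderiv ℝ g (θ l) = 0 := by
    intro l hl
    have hmin : IsLocalMin (fun x => f x + l * g x) (θ l) := by
      apply Filter.Eventually.of_forall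
      intro x
      by_cases hx : x = θ l
      · simp [hx]
      · exact (hθ l hl x hx).le
    have h0 := hmin.fderiv_eq_zero
    have hdg : DifferentiableAt ℝ (fun x => l * g x) (θ l) :=
      (hgd (θ l)).const_mul l
    rw [fderiv_fun_add (hfd (θ l)) hdg, fderiv_const_mul (hgd (θ l))] at h0
    exact h0
  -- injectivity of θ on [0,∞)
  have hinj : ∀ l ≥ (0:ℝ), ∀ m ≥ (0:ℝ), l ≠ m → θ l ≠ θ m := by
    intro l hl m hm hlm hcontra
    have h1 := hfo l hl
    have h2 := hfo m hm
    rw [hcontra] at h1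
    have h3 : (l - m) • fderiv ℝ g (θ m) = 0 := by
      have heq : (l - m) • fderiv ℝ g (θ m) =
          (fderiv ℝ f (θ m) + l • fderiv ℝ g (θ m)) -
            (fderiv ℝ f (θ m) + m • fderiv ℝ g (θ m)) := by
        rw [sub_smul]; abel
      rw [heq, h1, h2, sub_zero]
    have h4 : fderiv ℝ g (θ m) = 0 := by
      rcases smul_eq_zero.mp h3 with h | h
      · exact absurd (sub_eq_zero.mp h) hlm
      · exact h
    exact hgrad m hm (by simp [gradient, h4])
  -- strict envelope inequality
  have hA : ∀ l ≥ (0:ℝ), ∀ m ≥ (0:ℝ), l ≠ m →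
      f (θ l) + l * g (θ l) < (f (θ m) + m * g (θ m)) + (l - m) * g (θ m) := by
    intro l hl m hm hlm
    have h1 := hθ l hl (θ m) (hinj m hm l hl (Ne.symm hlm))
    have h2 : (f (θ m) + m * g (θ m)) + (l - m) * g (θ m)
        = f (θ m) + l * g (θ m) := by ring
    rw [h2]; exact h1
  -- strict antitonicity of G on [0,∞)
  have hanti : ∀ l ≥ (0:ℝ), ∀ m ≥ (0:ℝ), l < m → g (θ m) < g (θ l) := by
    intro l hl m hm hlm
    have h1 := hA l hl m hm (ne_of_lt hlm)
    have h2 := hA m hm l hl (ne_of_gt hlm)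
    nlinarith
  -- continuity of G
  have hGc : Continuous fun l => g (θ l) := hgd.continuous.comp hθd.continuous
  -- neighborhood picks
  have hpos : ∀ l ≥ (0:ℝ), 0 < g (θ l) → ∃ m, l < m ∧ 0 < g (θ m) := by
    intro l hl hGl
    obtain ⟨δ, hδ, hδ'⟩ := Metric.continuousAt_iff.mp hGc.continuousAt (g (θ l)) hGl
    refine ⟨l + δ/2, by linarith, ?_⟩
    have hx : dist (l + δ/2) l < δ := by
      rw [Real.dist_eq, show l + δ/2 - l = δ/2 by ring, abs_of_pos (by linarith)]
      linarith
    have := hδ' hx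
    rw [Real.dist_eq, abs_lt] at this
    linarith
  have hneg : ∀ l : ℝ, 0 < l → g (θ l) < 0 → ∃ m, 0 ≤ m ∧ m < l ∧ g (θ m) < 0 := by
    intro l hl hGl
    obtain ⟨δ, hδ, hδ'⟩ :=
      Metric.continuousAt_iff.mp hGc.continuousAt (-(g (θ l))) (by linarith)
    set m := max (l - δ/2) (l/2) with hmdef
    have hml : m < l := max_lt (by linarith) (by linarith)
    have hm0 : 0 ≤ m := le_max_of_le_right (by linarith)
    refine ⟨m, hm0, hml, ?_⟩
    have hx : dist m l < δ := by
      rw [Real.dist_eq, abs_lt]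
      constructor
      · have := le_max_left (l - δ/2) (l/2); linarith
      · linarith
    have := hδ' hx
    rw [Real.dist_eq, abs_lt] at this
    linarith
  -- main argument
  ext l
  simp only [Set.mem_setOf_eq, Set.mem_Ici]
  constructor
  · rintro ⟨hl, hmax⟩
    refine ⟨hl, ?_⟩
    have hkey : g (θ l) = 0 ∨ (l = 0 ∧ g (θ l) < 0) := by
      rcases lt_trichotomy (g (θ l)) 0 with h | h | h
      · rcases eq_or_lt_of_le hl with h0 | h0
        · exact Or.inr ⟨h0.symm, h⟩
        · exfalso
          obtain ⟨m, hm0, hml, hGm⟩ := hneg l h0 h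
          have h1 := hA l hl m hm0 (ne_of_gt hml)
          have hmx : f (θ m) + m * g (θ m) ≤ f (θ l) + l * g (θ l) :=
            hmax (Set.mem_Ici.mpr hm0)
          have h2 : (l - m) * g (θ m) < 0 :=
            mul_neg_of_pos_of_neg (by linarith) hGm
          linarith
      · exact Or.inl h
      · exfalso
        obtain ⟨m, hlm, hGm⟩ := hpos l hl h
        have h1 := hA l hl m (by linarith) (ne_of_lt hlm)
        have hmx : f (θ m) + m * g (θ m) ≤ f (θ l) + l * g (θ l) :=
          hmax (Set.mem_Ici.mpr (by linarith : (0:ℝ) ≤ m))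
        have h2 : (l - m) * g (θ m) < 0 :=
          mul_neg_of_neg_of_pos (by linarith) hGm
        linarith
    intro m hm
    have hm0 : (0:ℝ) ≤ m := hm
    show |g (θ l)| ≤ |g (θ m)|
    rcases hkey with h | ⟨h0, h⟩
    · simp [h]
    · subst h0
      rcases eq_or_lt_of_le hm0 with h0 | h0
      · rw [← h0]
      · have := hanti 0 le_rfl m (le_of_lt h0) h0
        rw [abs_of_neg h, abs_of_neg (by linarith)]
        linarith
  · rintro ⟨hl, hmin⟩
    refine ⟨hl, ?_⟩
    have hkey : g (θ l) = 0 ∨ (l = 0 ∧ g (θ l) < 0) := by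
      rcases lt_trichotomy (g (θ l)) 0 with h | h | h
      · rcases eq_or_lt_of_le hl with h0 | h0
        · exact Or.inr ⟨h0.symm, h⟩
        · exfalso
          obtain ⟨m, hm0, hml, hGm⟩ := hneg l h0 h
          have hlt := hanti m hm0 l hl hml
          have hmx : |g (θ l)| ≤ |g (θ m)| := hmin (Set.mem_Ici.mpr hm0)
          rw [abs_of_neg h, abs_of_neg hGm] at hmx
          linarith
      · exact Or.inl h
      · exfalso
        obtain ⟨m, hlm, hGm⟩ := hpos l hl h
        have hlt := hanti l hl m (by linarith) hlm
        have hmx : |g (θ l)| ≤ |g (θ m)| :=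
          hmin (Set.mem_Ici.mpr (by linarith : (0:ℝ) ≤ m))
        rw [abs_of_pos h, abs_of_pos hGm] at hmx
        linarith
    intro m hm
    have hm0 : (0:ℝ) ≤ m := hm
    show f (θ m) + m * g (θ m) ≤ f (θ l) + l * g (θ l)
    by_cases hml : m = l
    · subst hml; exact le_rfl
    · have h1 := hA m hm0 l hl hml
      rcases hkey with h | ⟨h0, h⟩
      · rw [h] at h1 ⊢
        linarith
      · subst h0
        have hm0' : 0 < m := lt_of_le_of_ne hm0 (Ne.symm hml)
        have h2 : (m - 0) * g (θ 0) < 0 :=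
          mul_neg_of_pos_of_neg (by linarith) h
        linarith
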